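/- Let a, b, k₁, k₂, λ₁, λ₂, ℓ be positive integers with gcd(a,b) = 1, gcd(k₁λ₁, k₂λ₂) = 1 and gcd(k₁k₂λ₁λ₂, ab) = 1. Then the subgroup 𝔏 = {(s,t) ∈ ℤ² : lcm(k₁λ₁, ℓ) ∣ s, k₂λ₂ ∣ (s − a·t), ℓ ∣ t} has finite index in ℤ², equal to k₁k₂λ₁λ₂ℓ² / gcd(k₁k₂λ₁λ₂, ℓ). -/

import Mathlib

/-- The sublattice `𝔏 = {(s,t) ∈ ℤ² : lcm(k₁λ₁, ℓ) ∣ s, k₂λ₂ ∣ s − at, ℓ ∣ t}`. -/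
def latticeL (a k₁ k₂ l₁ l₂ ℓ : ℕ) : AddSubgroup (ℤ × ℤ) where
  carrier := {p : ℤ × ℤ |
    ((Nat.lcm (k₁ * l₁) ℓ : ℕ) : ℤ) ∣ p.1 ∧
    ((k₂ * l₂ : ℕ) : ℤ) ∣ (p.1 - (a : ℤ) * p.2) ∧
    ((ℓ : ℕ) : ℤ) ∣ p.2}
  zero_mem' := ⟨dvd_zero _, by simp, dvd_zero _⟩
  add_mem' := by
    rintro p q ⟨h1, h2, h3⟩ ⟨g1, g2, g3⟩
    refine ⟨dvd_add h1 g1, ?_, dvd_add h3 g3⟩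
    have h : (p + q).1 - (a : ℤ) * (p + q).2 =
        (p.1 - (a : ℤ) * p.2) + (q.1 - (a : ℤ) * q.2) := by
      simp only [Prod.fst_add, Prod.snd_add]; ring
    rw [h]
    exact dvd_add h2 g2
  neg_mem' := by
    rintro p ⟨h1, h2, h3⟩
    refine ⟨dvd_neg.2 h1, ?_, dvd_neg.2 h3⟩
    have h : (-p).1 - (a : ℤ) * (-p).2 = -(p.1 - (a : ℤ) * p.2) := by
      simp only [Prod.fst_neg, Prod.snd_neg]; ring
    rw [h]
    exact dvd_neg.2 h2


/-- Scaling map `(x,y) ↦ (c x, d y)` on `ℤ²`. -/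
def scaleHom (c d : ℤ) : ℤ × ℤ →+ ℤ × ℤ where
  toFun p := (c * p.1, d * p.2)
  map_zero' := by simp
  map_add' p q := by
    simp only [Prod.fst_add, Prod.snd_add, Prod.mk_add_mk, mul_add]

lemma scaleHom_injective {c d : ℤ} (hc : c ≠ 0) (hd : d ≠ 0) :
    Function.Injective (scaleHom c d) := by
  rintro ⟨x, y⟩ ⟨x', y'⟩ h
  simp only [scaleHom, AddMonoidHom.coe_mk, ZeroHom.coe_mk, Prod.mk.injEq] at h
  exact Prod.ext (mul_left_cancel₀ hc h.1) (mul_left_cancel₀ hd h.2)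

lemma scaleHom_range (c d : ℤ) :
    (scaleHom c d).range =
      (AddSubgroup.zmultiples c).prod (AddSubgroup.zmultiples d) := by
  ext ⟨s, t⟩
  simp only [AddMonoidHom.mem_range, AddSubgroup.mem_prod, Int.mem_zmultiples_iff]
  constructor
  · rintro ⟨⟨x, y⟩, h⟩
    simp only [scaleHom, AddMonoidHom.coe_mk, ZeroHom.coe_mk, Prod.mk.injEq] at h
    exact ⟨⟨x, h.1.symm⟩, ⟨y, h.2.symm⟩⟩
  · rintro ⟨⟨x, hx⟩, ⟨y, hy⟩⟩
    exact ⟨(x, y), by simp [scaleHom, hx, hy]⟩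

/-- `(x,y) ↦ L x - A y mod n`. -/
def psiHom (L A n : ℕ) : ℤ × ℤ →+ ZMod n where
  toFun p := (((L : ℤ) * p.1 - (A : ℤ) * p.2 : ℤ) : ZMod n)
  map_zero' := by simp
  map_add' p q := by
    simp only [Prod.fst_add, Prod.snd_add]
    push_cast
    ring

lemma psiHom_range (L A n e : ℕ) (hn : n ≠ 0) (heL : e ∣ L) (heA : e ∣ A)
    (he : Nat.gcd n (Nat.gcd L A) = e) :
    (psiHom L A n).range = AddSubgroup.zmultiples ((e : ℕ) : ZMod n) := by
  apply le_antisymm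
  · rintro z ⟨⟨x, y⟩, rfl⟩
    obtain ⟨L', rfl⟩ := heL
    obtain ⟨A', rfl⟩ := heA
    rw [AddSubgroup.mem_zmultiples_iff]
    refine ⟨L' * x - A' * y, ?_⟩
    show (((L' * x - A' * y : ℤ)) • ((e : ℕ) : ZMod n) = _)
    rw [zsmul_eq_mul]
    show _ = (((((e * L' : ℕ) : ℤ)) * x - (((e * A' : ℕ) : ℤ)) * y : ℤ) : ZMod n)
    push_cast
    ring
  · rw [AddSubgroup.zmultiples_le]
    set d := Nat.gcd L A with hd
    refine ⟨(Nat.gcdA L A * Nat.gcdB n d, -(Nat.gcdB L A * Nat.gcdB n d)), ?_⟩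
    show ((((L : ℤ)) * (Nat.gcdA L A * Nat.gcdB n d)
        - ((A : ℤ)) * (-(Nat.gcdB L A * Nat.gcdB n d)) : ℤ) : ZMod n) = ((e : ℕ) : ZMod n)
    have h1 : (d : ℤ) = L * Nat.gcdA L A + A * Nat.gcdB L A := Nat.gcd_eq_gcd_ab L A
    have h2 : ((Nat.gcd n d : ℕ) : ℤ) = n * Nat.gcdA n d + d * Nat.gcdB n d :=
      Nat.gcd_eq_gcd_ab n d
    rw [he] at h2
    have key : ((L : ℤ)) * (Nat.gcdA L A * Nat.gcdB n d)
        - ((A : ℤ)) * (-(Nat.gcdB L A * Nat.gcdB n d))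
        = (e : ℤ) - n * Nat.gcdA n d := by
      rw [h2, h1]; ring
    rw [key]
    push_cast
    simp [ZMod.natCast_self]



theorem latticeL_index (a b k₁ k₂ l₁ l₂ ℓ : ℕ) (ha : 0 < a) (hb : 0 < b)
    (hk₁ : 0 < k₁) (hk₂ : 0 < k₂) (hl₁ : 0 < l₁) (hl₂ : 0 < l₂) (hℓ : 0 < ℓ)
    (hab : Nat.gcd a b = 1) (hco : Nat.gcd (k₁ * l₁) (k₂ * l₂) = 1)
    (hcoab : Nat.gcd (k₁ * k₂ * l₁ * l₂) (a * b) = 1) :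
    (latticeL a k₁ k₂ l₁ l₂ ℓ).FiniteIndex ∧
      (latticeL a k₁ k₂ l₁ l₂ ℓ).index =
        k₁ * k₂ * l₁ * l₂ * ℓ ^ 2 / Nat.gcd (k₁ * k₂ * l₁ * l₂) ℓ := by
  set m := k₁ * l₁ with hm
  set n := k₂ * l₂ with hn
  set L := Nat.lcm m ℓ with hLdef
  set g := Nat.gcd m ℓ with hg
  set e := Nat.gcd n ℓ with he
  have hm0 : 0 < m := Nat.mul_pos hk₁ hl₁
  have hn0 : 0 < n := Nat.mul_pos hk₂ hl₂
  have hL0 : 0 < L := Nat.pos_of_ne_zero (Nat.lcm_ne_zero hm0.ne' hℓ.ne')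
  have hg0 : 0 < g := Nat.gcd_pos_of_pos_left ℓ hm0
  have he0 : 0 < e := Nat.gcd_pos_of_pos_left ℓ hn0
  have hcmn : Nat.Coprime m n := hco
  have heℓ : e ∣ ℓ := Nat.gcd_dvd_right n ℓ
  have hgℓ : g ∣ ℓ := Nat.gcd_dvd_right m ℓ
  have hen : e ∣ n := Nat.gcd_dvd_left n ℓ
  have heL : e ∣ L := heℓ.trans (Nat.dvd_lcm_right m ℓ)
  have heA : e ∣ a * ℓ := heℓ.mul_left a
  have hgnL : Nat.gcd n L = e := by
    apply Nat.dvd_antisymm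
    · have h1 : Nat.gcd n L ∣ Nat.gcd n (m * ℓ) :=
        Nat.dvd_gcd (Nat.gcd_dvd_left _ _)
          ((Nat.gcd_dvd_right n L).trans
            (Nat.lcm_dvd (dvd_mul_right m ℓ) (dvd_mul_left ℓ m)))
      have h2 : Nat.gcd n (m * ℓ) = Nat.gcd n ℓ := by
        rw [Nat.gcd_comm n (m * ℓ), Nat.Coprime.gcd_mul_left_cancel ℓ hcmn, Nat.gcd_comm]
      rwa [h2] at h1
    · exact Nat.dvd_gcd hen heL
  have hkey : Nat.gcd n (Nat.gcd L (a * ℓ)) = e := by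
    apply Nat.dvd_antisymm
    · exact hgnL ▸ Nat.dvd_gcd (Nat.gcd_dvd_left _ _)
        ((Nat.gcd_dvd_right _ _).trans (Nat.gcd_dvd_left _ _))
    · exact Nat.dvd_gcd hen (Nat.dvd_gcd heL heA)
  -- the lattice as the image of a kernel
  have hlat : latticeL a k₁ k₂ l₁ l₂ ℓ
      = (AddMonoidHom.ker (psiHom L (a * ℓ) n)).map (scaleHom (L : ℤ) (ℓ : ℤ)) := by
    ext ⟨s, t⟩
    constructor
    · rintro ⟨h1, h2, h3⟩
      obtain ⟨x, rfl⟩ := h1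
      obtain ⟨y, rfl⟩ := h3
      refine ⟨(x, y), ?_, rfl⟩
      show (((L : ℤ) * x - ((a * ℓ : ℕ) : ℤ) * y : ℤ) : ZMod n) = 0
      rw [ZMod.intCast_zmod_eq_zero_iff_dvd]
      have hrw : (L : ℤ) * x - ((a * ℓ : ℕ) : ℤ) * y
          = (L : ℤ) * x - (a : ℤ) * ((ℓ : ℤ) * y) := by push_cast; ring
      rw [hrw]
      exact h2
    · rintro ⟨⟨x, y⟩, hker, heq⟩
      rw [← heq]
      have hker' : ((n : ℕ) : ℤ) ∣ (L : ℤ) * x - ((a * ℓ : ℕ) : ℤ) * y := by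
        rw [← ZMod.intCast_zmod_eq_zero_iff_dvd]
        exact hker
      refine ⟨⟨x, rfl⟩, ?_, ⟨y, rfl⟩⟩
      have hrw : (scaleHom (L : ℤ) (ℓ : ℤ) (x, y)).1
          - (a : ℤ) * (scaleHom (L : ℤ) (ℓ : ℤ) (x, y)).2
          = (L : ℤ) * x - ((a * ℓ : ℕ) : ℤ) * y := by
        show (L : ℤ) * x - (a : ℤ) * ((ℓ : ℤ) * y) = _
        push_cast; ring
      rw [hrw]
      exact hker'
  have hLne : (L : ℤ) ≠ 0 := Int.natCast_ne_zero.mpr hL0.ne'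
  have hℓne : (ℓ : ℤ) ≠ 0 := Int.natCast_ne_zero.mpr hℓ.ne'
  have hidx : (latticeL a k₁ k₂ l₁ l₂ ℓ).index = n / e * (L * ℓ) := by
    rw [hlat, AddSubgroup.index_map_of_injective _ (scaleHom_injective hLne hℓne)]
    congr 1
    · rw [AddSubgroup.index_ker, psiHom_range L (a * ℓ) n e hn0.ne' heL heA hkey,
        Nat.card_zmultiples, ZMod.addOrderOf_coe e hn0.ne', Nat.gcd_eq_right hen]
    · rw [scaleHom_range, AddSubgroup.index_prod, Int.index_zmultiples,
        Int.index_zmultiples, Int.natAbs_natCast, Int.natAbs_natCast]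
  have hK : k₁ * k₂ * l₁ * l₂ = m * n := by rw [hm, hn]; ring
  have hG : Nat.gcd (k₁ * k₂ * l₁ * l₂) ℓ = g * e := by
    rw [hK]
    apply Nat.dvd_antisymm
    · refine (Nat.dvd_gcd_mul_gcd_iff_dvd_mul.mpr (Nat.gcd_dvd_left (m * n) ℓ)).trans
        (mul_dvd_mul ?_ ?_)
      · exact Nat.dvd_gcd (Nat.gcd_dvd_right _ _)
          ((Nat.gcd_dvd_left _ _).trans (Nat.gcd_dvd_right (m * n) ℓ))
      · exact Nat.dvd_gcd (Nat.gcd_dvd_right _ _)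
          ((Nat.gcd_dvd_left _ _).trans (Nat.gcd_dvd_right (m * n) ℓ))
    · have hge : Nat.Coprime g e :=
        Nat.Coprime.coprime_dvd_left (Nat.gcd_dvd_left m ℓ)
          (Nat.Coprime.coprime_dvd_right (Nat.gcd_dvd_left n ℓ) hcmn)
      exact Nat.dvd_gcd (mul_dvd_mul (Nat.gcd_dvd_left m ℓ) (Nat.gcd_dvd_left n ℓ))
        (Nat.Coprime.mul_dvd_of_dvd_of_dvd hge hgℓ heℓ)
  have hval : k₁ * k₂ * l₁ * l₂ * ℓ ^ 2 / Nat.gcd (k₁ * k₂ * l₁ * l₂) ℓ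
      = n / e * (L * ℓ) := by
    rw [hG]
    apply Nat.div_eq_of_eq_mul_left (Nat.mul_pos hg0 he0)
    have h1 : n / e * e = n := Nat.div_mul_cancel hen
    have h2 : g * L = m * ℓ := Nat.gcd_mul_lcm m ℓ
    calc k₁ * k₂ * l₁ * l₂ * ℓ ^ 2 = (g * L) * (n / e * e) * ℓ := by
          rw [h1, h2, hK]; ring
      _ = n / e * (L * ℓ) * (g * e) := by ring
  have hne : (latticeL a k₁ k₂ l₁ l₂ ℓ).index ≠ 0 := by
    rw [hidx]
    have : 0 < n / e := Nat.div_pos (Nat.le_of_dvd hn0 hen) he0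
    positivity
  exact ⟨⟨hne⟩, by rw [hidx, hval]⟩
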